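/- Let α, β > −1 be real and n ≥ 1 an integer. Let x₁, …, x_n be distinct points of (−1, 1) and w₁^R, …, w_n^R real numbers such that for every real polynomial p with deg p ≤ 2n − 1, ∫_{−1}^{1} p(x)·(1 − x)^{α+1}·(1 + x)^{β} dx = Σ_{i=1}^n w_i^R·p(x_i). Set w_{n+1} = 2^{α+β+1}·Γ(α + 1)·Γ(α + 2)·Γ(n + 1)·Γ(n + β + 1)/(Γ(n + α + 2)·Γ(n + α + β + 2)) and w_i = w_i^R/(1 − x_i) for i = 1, …, n. Then for every real polynomial p with deg p ≤ 2n, ∫_{−1}^{1} p(x)·(1 − x)^{α}·(1 + x)^{β} dx = Σ_{i=1}^n w_i·p(x_i) + w_{n+1}·p(1). (Gauss–Jacobi–Radau quadrature with fixed node +1 has maximal degree of exactness 2n.) -/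

import Mathlib

open Set MeasureTheory intervalIntegral Polynomial


lemma wt_cont {a : ℝ} (ha : 0 < a) : Continuous (fun t : ℝ => (1 - t) ^ a) := by
  rw [continuous_iff_continuousAt]
  intro y
  exact (Real.continuousAt_rpow_const _ _ (Or.inr ha.le)).comp (continuousAt_const.sub continuousAt_id)

lemma II {f : ℝ → ℝ} (hf : Continuous f) {a b : ℝ} (ha : -1 < a) (hb : -1 < b) :
    IntervalIntegrable (fun t => f t * (1 - t) ^ a * (1 + t) ^ b) volume (-1) 1 := by
  have h1 : IntervalIntegrable (fun t => f t * (1 - t) ^ a * (1 + t) ^ b) volume 0 1 := by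
    have base : IntervalIntegrable (fun t : ℝ => (1 - t) ^ a) volume 0 1 := by
      have := (intervalIntegrable_rpow' (a := 0) (b := 1) ha).comp_sub_left 1
      simpa using this.symm
    have cont : ContinuousOn (fun t : ℝ => f t * (1 + t) ^ b) (uIcc 0 1) := by
      apply (hf.continuousOn).mul
      apply ContinuousOn.rpow_const (by fun_prop)
      intro t ht
      left
      rw [uIcc_of_le (by norm_num)] at ht
      nlinarith [ht.1]
    have := base.continuousOn_mul cont
    have e : (fun t => f t * (1 - t) ^ a * (1 + t) ^ b) = fun t => (f t * (1 + t) ^ b) * ((1 - t) ^ a) := by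
      funext t; ring
    rw [e]; exact this
  have h2 : IntervalIntegrable (fun t => f t * (1 - t) ^ a * (1 + t) ^ b) volume (-1) 0 := by
    have base : IntervalIntegrable (fun t : ℝ => (1 + t) ^ b) volume (-1) 0 := by
      have := (intervalIntegrable_rpow' (a := 0) (b := 1) hb).comp_add_right 1
      simpa [add_comm] using this
    have cont : ContinuousOn (fun t : ℝ => f t * (1 - t) ^ a) (uIcc (-1) 0) := by
      apply (hf.continuousOn).mul
      apply ContinuousOn.rpow_const (by fun_prop)
      intro t ht
      left
      rw [uIcc_of_le (by norm_num)] at ht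
      nlinarith [ht.2]
    have := base.continuousOn_mul cont
    have e : (fun t => f t * (1 - t) ^ a * (1 + t) ^ b) = fun t => (f t * (1 - t) ^ a) * ((1 + t) ^ b) := by
      funext t; ring
    rw [e]; exact this
  exact h2.trans h1

lemma realBeta {u v : ℝ} (hu : 0 < u) (hv : 0 < v) :
    ∫ x in (0:ℝ)..1, x ^ (u - 1) * (1 - x) ^ (v - 1)
      = Real.Gamma u * Real.Gamma v / Real.Gamma (u + v) := by
  have key : ((∫ x in (0:ℝ)..1, x ^ (u - 1) * (1 - x) ^ (v - 1) : ℝ) : ℂ)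
      = Complex.betaIntegral u v := by
    rw [← intervalIntegral.integral_ofReal]
    rw [Complex.betaIntegral]
    apply intervalIntegral.integral_congr
    intro t ht
    rw [uIcc_of_le (by norm_num)] at ht
    simp only [Complex.ofReal_mul]
    rw [Complex.ofReal_cpow ht.1, Complex.ofReal_cpow (by linarith [ht.2])]
    push_cast
    ring
  have hg := Complex.Gamma_mul_Gamma_eq_betaIntegral
    (s := (u:ℂ)) (t := (v:ℂ)) (by simpa using hu) (by simpa using hv)
  have hne : Real.Gamma (u + v) ≠ 0 := (Real.Gamma_pos_of_pos (by linarith)).ne'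
  have hne' : Complex.Gamma ((u:ℂ) + (v:ℂ)) ≠ 0 := by
    rw [← Complex.ofReal_add, Complex.Gamma_ofReal]
    exact_mod_cast hne
  have hB : Complex.betaIntegral u v
      = Complex.Gamma u * Complex.Gamma v / Complex.Gamma ((u:ℂ) + (v:ℂ)) := by
    rw [eq_div_iff hne']
    linear_combination -hg
  have hcast : ((Real.Gamma u * Real.Gamma v / Real.Gamma (u + v) : ℝ) : ℂ)
      = Complex.Gamma u * Complex.Gamma v / Complex.Gamma ((u:ℂ) + (v:ℂ)) := by
    rw [Complex.ofReal_div, Complex.ofReal_mul, ← Complex.Gamma_ofReal,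
      ← Complex.Gamma_ofReal, ← Complex.Gamma_ofReal, Complex.ofReal_add]
  rw [hB, ← hcast] at key
  exact_mod_cast key

lemma Jint {a b : ℝ} (ha : -1 < a) (hb : -1 < b) :
    ∫ t in (-1:ℝ)..1, (1 - t) ^ a * (1 + t) ^ b
      = 2 ^ (a + b + 1) * Real.Gamma (a + 1) * Real.Gamma (b + 1) / Real.Gamma (a + b + 2) := by
  have hc := intervalIntegral.integral_comp_mul_add
    (f := fun t : ℝ => (1 - t) ^ a * (1 + t) ^ b) (a := (0:ℝ)) (b := 1) (c := 2) two_ne_zero (-1)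
  rw [show 2*(0:ℝ) + -1 = -1 by norm_num, show 2*(1:ℝ) + -1 = 1 by norm_num] at hc
  have e : (∫ x in (0:ℝ)..1, (fun t : ℝ => (1 - t) ^ a * (1 + t) ^ b) (2*x + -1))
      = 2 ^ (a + b) * ∫ x in (0:ℝ)..1, x ^ ((b+1) - 1) * (1 - x) ^ ((a+1) - 1) := by
    rw [← intervalIntegral.integral_const_mul]
    apply intervalIntegral.integral_congr
    intro t ht
    rw [uIcc_of_le (by norm_num)] at ht
    show (1 - (2*t + -1)) ^ a * (1 + (2*t + -1)) ^ b
        = 2 ^ (a+b) * (t ^ ((b+1) - 1) * (1 - t) ^ ((a+1) - 1))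
    have h1 : (1 - (2*t + -1)) = 2 * (1 - t) := by ring
    have h2 : (1 + (2*t + -1)) = 2 * t := by ring
    rw [h1, h2, Real.mul_rpow (by norm_num) (by linarith [ht.2]),
        Real.mul_rpow (by norm_num) ht.1,
        Real.rpow_add (show (0:ℝ) < 2 by norm_num) a b]
    simp only [add_sub_cancel_right]
    ring
  rw [e, realBeta (by linarith) (by linarith)] at hc
  rw [smul_eq_mul] at hc
  have h2 : (2:ℝ) ^ (a + b + 1) = 2 ^ (a+b) * 2 := by
    rw [Real.rpow_add (by norm_num) _ 1, Real.rpow_one]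
  have hb1 : (b + 1) + (a + 1) = a + b + 2 := by ring
  rw [hb1] at hc
  rw [show (∫ t in (-1:ℝ)..1, (1 - t) ^ a * (1 + t) ^ b)
      = 2 * (2^(a+b) * (Real.Gamma (b+1) * Real.Gamma (a+1) / Real.Gamma (a+b+2))) by linarith,
    h2]
  ring

lemma hasDerivAt_weight (S : Polynomial ℝ) (p q : ℝ) {t : ℝ} (ht : t ∈ Ioo (-1:ℝ) 1) :
    HasDerivAt (fun t => S.eval t * (1 - t) ^ p * (1 + t) ^ q)
      ((S.derivative.eval t * ((1-t) * (1+t)) - p * S.eval t * (1+t) + q * S.eval t * (1-t))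
        * (1-t) ^ (p-1) * (1+t) ^ (q-1)) t := by
  have ht1 : 0 < 1 - t := by linarith [ht.2]
  have ht2 : 0 < 1 + t := by linarith [ht.1]
  have hS : HasDerivAt (fun u : ℝ => S.eval u) (S.derivative.eval t) t := S.hasDerivAt t
  have hA : HasDerivAt (fun u : ℝ => (1 - u) ^ p) (-(p * (1-t) ^ (p-1))) t := by
    have h0 := (Real.hasDerivAt_rpow_const (x := 1 - t) (p := p) (Or.inl ht1.ne')).comp t
      ((hasDerivAt_const t (1:ℝ)).sub (hasDerivAt_id t))
    simp at h0; exact h0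
  have hB : HasDerivAt (fun u : ℝ => (1 + u) ^ q) (q * (1+t) ^ (q-1)) t := by
    have h0 := (Real.hasDerivAt_rpow_const (x := 1 + t) (p := q) (Or.inl ht2.ne')).comp t
      ((hasDerivAt_const t (1:ℝ)).add (hasDerivAt_id t))
    simp at h0; exact h0
  have := (hS.mul hA).mul hB
  convert this using 1
  case e'_4 => rfl
  case e'_5 => rfl
  case e'_8 => rfl
  simp only [Pi.mul_apply]
  have e1 : (1-t) ^ p = (1-t) ^ (p-1) * (1-t) := by
    rw [← Real.rpow_add_one ht1.ne' (p-1)]; ring_nf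
  have e2 : (1+t) ^ q = (1+t) ^ (q-1) * (1+t) := by
    rw [← Real.rpow_add_one ht2.ne' (q-1)]; ring_nf
  rw [e1, e2]; ring

lemma contW (S : Polynomial ℝ) {p q : ℝ} (hp : 0 < p) (hq : 0 < q) :
    Continuous (fun t : ℝ => S.eval t * (1 - t) ^ p * (1 + t) ^ q) := by
  have c1 : Continuous (fun t : ℝ => (1 - t) ^ p) := by
    rw [continuous_iff_continuousAt]; intro y
    exact (Real.continuousAt_rpow_const _ _ (Or.inr hp.le)).comp
      (continuousAt_const.sub continuousAt_id)
  have c2 : Continuous (fun t : ℝ => (1 + t) ^ q) := by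
    rw [continuous_iff_continuousAt]; intro y
    exact (Real.continuousAt_rpow_const _ _ (Or.inr hq.le)).comp
      (continuousAt_const.add continuousAt_id)
  exact (S.continuous_aeval.mul c1).mul c2

lemma ibp_zero {F f : ℝ → ℝ} (hcont : ContinuousOn F (Icc (-1) 1))
    (hF1 : F 1 = 0) (hF2 : F (-1) = 0)
    (hd : ∀ t ∈ Ioo (-1:ℝ) 1, HasDerivAt F (f t) t)
    (hint : IntervalIntegrable f volume (-1) 1) :
    ∫ t in (-1:ℝ)..1, f t = 0 := by
  rw [integral_eq_sub_of_hasDeriv_right_of_le (by norm_num) hcont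
    (fun u hu => (hd u hu).hasDerivWithinAt) hint, hF1, hF2, sub_zero]

noncomputable def Spoly (A B : ℝ) (n : ℕ) : ℕ → Polynomial ℝ
  | 0 => 1
  | (k+1) => (Spoly A B n k).derivative * ((1 - X) * (1 + X))
      - C ((n:ℝ) + A - k) * Spoly A B n k * (1 + X)
      + C ((n:ℝ) + B - k) * Spoly A B n k * (1 - X)

lemma Spoly_natDegree_le (A B : ℝ) (n k : ℕ) : (Spoly A B n k).natDegree ≤ k := by
  induction k with
  | zero => simp [Spoly]
  | succ k ih =>
    rw [Spoly]
    apply le_trans (natDegree_add_le _ _)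
    apply max_le
    · apply le_trans (natDegree_sub_le _ _)
      apply max_le
      · rcases Nat.eq_zero_or_pos k with hk | hk
        · subst hk
          have : (Spoly A B n 0).derivative = 0 := by simp [Spoly]
          rw [this, zero_mul]; simp
        · apply le_trans (natDegree_mul_le)
          have h1 : (Spoly A B n k).derivative.natDegree ≤ k - 1 :=
            le_trans (natDegree_derivative_le _) (by omega)
          have h2 : ((1 - X) * (1 + X) : Polynomial ℝ).natDegree ≤ 2 := by
            apply le_trans natDegree_mul_le
            have := natDegree_sub_le (1 : Polynomial ℝ) X
            have := natDegree_add_le (1 : Polynomial ℝ) X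
            simp at *
            omega
          omega
      · apply le_trans natDegree_mul_le
        have h1 : (C ((n:ℝ) + A - k) * Spoly A B n k).natDegree ≤ k :=
          le_trans natDegree_mul_le (by rw [natDegree_C, zero_add]; exact ih)
        have h2 : ((1 + X) : Polynomial ℝ).natDegree ≤ 1 := by
          apply le_trans (natDegree_add_le _ _); simp
        omega
    · apply le_trans natDegree_mul_le
      have h1 : (C ((n:ℝ) + B - k) * Spoly A B n k).natDegree ≤ k :=
        le_trans natDegree_mul_le (by rw [natDegree_C, zero_add]; exact ih)
      have h2 : ((1 - X) : Polynomial ℝ).natDegree ≤ 1 := by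
        apply le_trans (natDegree_sub_le _ _); simp
      omega

lemma Spoly_coeff_succ (A B : ℝ) (n k : ℕ) :
    (Spoly A B n (k+1)).coeff (k+1)
      = -(2*(n:ℝ) + A + B - k) * (Spoly A B n k).coeff k := by
  have hk := Spoly_natDegree_le A B n k
  set S := Spoly A B n k with hS
  have hhigh : ∀ m, k < m → S.coeff m = 0 := fun m hm =>
    coeff_eq_zero_of_natDegree_lt (lt_of_le_of_lt hk hm)
  rw [Spoly]
  have e2 : ((1 - X) * (1 + X) : Polynomial ℝ) = 1 - X^2 := by ring
  rw [e2]
  have hd1 : (S.derivative * (1 - X^2)).coeff (k+1)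
      = S.derivative.coeff (k+1) - (S.derivative * X^2).coeff (k+1) := by
    rw [mul_sub, mul_one]; simp
  have hd2 : S.derivative.coeff (k+1) = 0 := by
    rw [coeff_derivative, hhigh (k+2) (by omega)]; ring
  have hd3 : (S.derivative * X^2).coeff (k+1) = (k:ℝ) * S.coeff k := by
    rw [coeff_mul_X_pow']
    rcases Nat.eq_zero_or_pos k with hk0 | hk0
    · subst hk0; simp
    · rw [if_pos (by omega)]
      have : k + 1 - 2 = k - 1 := by omega
      rw [this, coeff_derivative]
      have : k - 1 + 1 = k := by omega
      rw [this]
      push_cast [Nat.cast_sub hk0]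
      ring
  have hp1 : (C ((n:ℝ) + A - k) * S * (1 + X)).coeff (k+1)
      = ((n:ℝ) + A - k) * S.coeff k := by
    rw [mul_add, mul_one, coeff_add, mul_assoc, coeff_C_mul, coeff_C_mul, coeff_mul_X,
      hhigh (k+1) (by omega)]
    ring
  have hp2 : (C ((n:ℝ) + B - k) * S * (1 - X)).coeff (k+1)
      = -(((n:ℝ) + B - k) * S.coeff k) := by
    rw [mul_sub, mul_one, coeff_sub, mul_assoc, coeff_C_mul, coeff_C_mul, coeff_mul_X,
      hhigh (k+1) (by omega)]
    ring
  rw [coeff_add, coeff_sub, hd1, hd2, hd3, hp1, hp2]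
  ring

lemma Spoly_eval_one (A B : ℝ) (n k : ℕ) :
    (Spoly A B n (k+1)).eval 1 = -2*((n:ℝ) + A - k) * (Spoly A B n k).eval 1 := by
  simp [Spoly]; try ring

lemma Spoly_eval_rec (A B : ℝ) (n k : ℕ) (t : ℝ) :
    (Spoly A B n (k+1)).eval t
      = (Spoly A B n k).derivative.eval t * ((1-t)*(1+t))
        - ((n:ℝ) + A - k) * (Spoly A B n k).eval t * (1+t)
        + ((n:ℝ) + B - k) * (Spoly A B n k).eval t * (1-t) := by
  simp [Spoly]; try ring

lemma posint {E : Polynomial ℝ} (hE : E ≠ 0) {a b : ℝ} (ha : -1 < a) (hb : -1 < b)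
    (hcont : Continuous fun t : ℝ => (E.eval t)^2)
    (hint : IntervalIntegrable (fun t => (E.eval t)^2 * (1 - t) ^ a * (1 + t) ^ b) volume (-1) 1) :
    0 < ∫ t in (-1:ℝ)..1, (E.eval t)^2 * (1 - t) ^ a * (1 + t) ^ b := by
  set f := fun t : ℝ => (E.eval t)^2 * (1 - t) ^ a * (1 + t) ^ b with hf
  rw [intervalIntegral.integral_of_le (by norm_num : (-1:ℝ) ≤ 1)]
  rw [MeasureTheory.setIntegral_pos_iff_support_of_nonneg_ae]
  · -- 0 < volume (support f ∩ Ioc (-1) 1)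
    have hsub : Ioo (-1:ℝ) 1 \ {t | E.IsRoot t} ⊆ Function.support f ∩ Ioc (-1:ℝ) 1 := by
      rintro t ⟨ht, hr⟩
      refine ⟨?_, Ioo_subset_Ioc_self ht⟩
      have h1 : 0 < 1 - t := by linarith [ht.2]
      have h2 : 0 < 1 + t := by linarith [ht.1]
      have hEt : E.eval t ≠ 0 := hr
      have : 0 < f t := by
        apply mul_pos (mul_pos _ (Real.rpow_pos_of_pos h1 a)) (Real.rpow_pos_of_pos h2 b)
        positivity
      exact this.ne'
    have hroots : volume {t : ℝ | E.IsRoot t} = 0 :=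
      (Polynomial.finite_setOf_isRoot hE).measure_zero _
    have h2 : volume (Ioo (-1:ℝ) 1 \ {t | E.IsRoot t}) = volume (Ioo (-1:ℝ) 1) :=
      measure_diff_null hroots
    calc (0:ENNReal) < volume (Ioo (-1:ℝ) 1) := by rw [Real.volume_Ioo]; norm_num
    _ = volume (Ioo (-1:ℝ) 1 \ {t | E.IsRoot t}) := h2.symm
    _ ≤ volume (Function.support f ∩ Ioc (-1:ℝ) 1) := measure_mono hsub
  · -- 0 ≤ᵐ f on restrict
    filter_upwards [ae_restrict_mem measurableSet_Ioc] with t ht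
    have h1 : 0 ≤ 1 - t := by linarith [ht.2]
    have h2 : 0 < 1 + t := by linarith [ht.1]
    apply mul_nonneg (mul_nonneg (by positivity) (Real.rpow_nonneg h1 a))
      (Real.rpow_nonneg h2.le b)
  · rw [← intervalIntegrable_iff_integrableOn_Ioc_of_le (by norm_num : (-1:ℝ) ≤ 1)]
    exact hint

lemma chainU_step (α β : ℝ) (hα : -1 < α) (hβ : -1 < β) (n k : ℕ) (hk : k < n) :
    (∫ t in (-1:ℝ)..1, (C (k.factorial : ℝ) * Spoly (α+1) β n (n-k)).eval t
        * (1-t)^α * (1+t)^(β+(k:ℝ)))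
      = - ∫ t in (-1:ℝ)..1, (C ((k+1).factorial : ℝ) * Spoly (α+1) β n (n-(k+1))).eval t
        * (1-t)^α * (1+t)^(β+((k:ℝ)+1)) := by
  have hidx : n - (k+1) = (n-1-k) := by omega
  rw [hidx]
  have hidx2 : n - k = (n-1-k) + 1 := by omega
  have hcast : ((n-1-k : ℕ) : ℝ) = (n:ℝ) - 1 - (k:ℝ) := by
    have h1 : n - 1 - k + (k + 1) = n := by omega
    have := congrArg (Nat.cast : ℕ → ℝ) h1
    push_cast at this
    linarith
  set S := Spoly (α+1) β n (n-1-k) with hSdef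
  set f1 : ℝ → ℝ := fun t => (C (k.factorial : ℝ) * Spoly (α+1) β n (n-k)).eval t
      * (1-t)^α * (1+t)^(β+(k:ℝ)) with hf1
  set f2 : ℝ → ℝ := fun t => (C ((k+1).factorial : ℝ) * S).eval t
      * (1-t)^α * (1+t)^(β+((k:ℝ)+1)) with hf2
  set F : ℝ → ℝ := fun t => (C (k.factorial : ℝ) * S).eval t * (1-t)^(α+1) * (1+t)^(β+(k:ℝ)+1)
    with hF
  have int1 : IntervalIntegrable f1 volume (-1) 1 :=
    II ((C (k.factorial : ℝ) * Spoly (α+1) β n (n-k)).continuous) hα (by linarith [Nat.cast_nonneg (α := ℝ) k])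
  have int2 : IntervalIntegrable f2 volume (-1) 1 :=
    II ((C ((k+1).factorial : ℝ) * S).continuous) hα (by linarith [Nat.cast_nonneg (α := ℝ) k])
  have key : ∫ t in (-1:ℝ)..1, (f1 t + f2 t) = 0 := by
    apply ibp_zero (F := F)
    · exact (contW _ (by linarith) (by linarith [Nat.cast_nonneg (α := ℝ) k])).continuousOn
    · show (C (k.factorial : ℝ) * S).eval 1 * (1-(1:ℝ))^(α+1) * (1+(1:ℝ))^(β+(k:ℝ)+1) = 0
      rw [show (1:ℝ)-1 = 0 by norm_num, Real.zero_rpow (by linarith : α+1 ≠ 0)]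
      ring
    · show (C (k.factorial : ℝ) * S).eval (-1) * (1-(-1:ℝ))^(α+1) * (1+(-1:ℝ))^(β+(k:ℝ)+1) = 0
      rw [show (1:ℝ)+(-1) = 0 by norm_num,
        Real.zero_rpow (by push_cast; linarith [Nat.cast_nonneg (α := ℝ) k] : β+(k:ℝ)+1 ≠ 0)]
      ring
    · intro t ht
      have h1 : (0:ℝ) < 1 - t := by linarith [ht.2]
      have h2 : (0:ℝ) < 1 + t := by linarith [ht.1]
      have HD := hasDerivAt_weight (C (k.factorial : ℝ) * S) (α+1) (β+(k:ℝ)+1) ht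
      have heq : f1 t + f2 t
          = ((C (k.factorial : ℝ) * S).derivative.eval t * ((1-t) * (1+t))
            - (α+1) * (C (k.factorial : ℝ) * S).eval t * (1+t)
            + (β+(k:ℝ)+1) * (C (k.factorial : ℝ) * S).eval t * (1-t))
            * (1-t) ^ (α+1-1) * (1+t) ^ (β+(k:ℝ)+1-1) := by
        have e1 : α+1-1 = α := by ring
        have e2 : β+(k:ℝ)+1-1 = β+(k:ℝ) := by ring
        rw [e1, e2]
        simp only [hf1, hf2, derivative_mul, derivative_C, zero_mul, zero_add, eval_mul,
          eval_C, hidx2, hidx, Spoly_eval_rec, ← hSdef]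
        rw [show β+((k:ℝ)+1) = (β+(k:ℝ))+1 by ring, Real.rpow_add_one h2.ne']
        rw [hcast]
        push_cast [Nat.factorial_succ]
        ring
      rw [heq]
      exact HD
    · exact int1.add int2
  rw [intervalIntegral.integral_add int1 int2] at key
  linarith

lemma chainU (α β : ℝ) (hα : -1 < α) (hβ : -1 < β) (n : ℕ) :
    (∫ t in (-1:ℝ)..1, (Spoly (α+1) β n n).eval t * (1-t)^α * (1+t)^β)
      = (-1:ℝ)^n * (n.factorial : ℝ) *
        (2 ^ (α + (β+(n:ℝ)) + 1) * Real.Gamma (α + 1) * Real.Gamma ((β+(n:ℝ)) + 1)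
          / Real.Gamma (α + (β+(n:ℝ)) + 2)) := by
  have aux : ∀ k, k ≤ n →
      (∫ t in (-1:ℝ)..1, (Spoly (α+1) β n n).eval t * (1-t)^α * (1+t)^β)
        = (-1:ℝ)^k * ∫ t in (-1:ℝ)..1, (C (k.factorial : ℝ) * Spoly (α+1) β n (n-k)).eval t
            * (1-t)^α * (1+t)^(β+(k:ℝ)) := by
    intro k
    induction k with
    | zero => intro _; simp [Nat.factorial]
    | succ k ih =>
      intro h
      rw [ih (by omega), chainU_step α β hα hβ n k (by omega)]
      push_cast
      ring
  have hfin := aux n le_rfl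
  rw [hfin]
  have : (∫ t in (-1:ℝ)..1, (C (n.factorial : ℝ) * Spoly (α+1) β n (n-n)).eval t
      * (1-t)^α * (1+t)^(β+(n:ℝ)))
      = (n.factorial : ℝ) * ∫ t in (-1:ℝ)..1, (1-t)^α * (1+t)^(β+(n:ℝ)) := by
    rw [← intervalIntegral.integral_const_mul]
    apply intervalIntegral.integral_congr
    intro t _
    simp [Nat.sub_self, Spoly]
    ring
  rw [this, Jint hα (by linarith [Nat.cast_nonneg (α := ℝ) n])]
  ring

lemma chainV_step (α β : ℝ) (hα : -1 < α) (hβ : -1 < β) (n k : ℕ) (hk : k < n)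
    (q : Polynomial ℝ) :
    (∫ t in (-1:ℝ)..1, ((derivative^[k] q) * Spoly (α+1) β n (n-k)).eval t
        * (1-t)^(α+1+(k:ℝ)) * (1+t)^(β+(k:ℝ)))
      = - ∫ t in (-1:ℝ)..1, ((derivative^[k+1] q) * Spoly (α+1) β n (n-(k+1))).eval t
        * (1-t)^(α+1+((k:ℝ)+1)) * (1+t)^(β+((k:ℝ)+1)) := by
  have hidx : n - (k+1) = (n-1-k) := by omega
  rw [hidx]
  have hidx2 : n - k = (n-1-k) + 1 := by omega
  have hcast : ((n-1-k : ℕ) : ℝ) = (n:ℝ) - 1 - (k:ℝ) := by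
    have h1 : n - 1 - k + (k + 1) = n := by omega
    have := congrArg (Nat.cast : ℕ → ℝ) h1
    push_cast at this
    linarith
  have hknn : (0:ℝ) ≤ (k:ℝ) := Nat.cast_nonneg k
  set S := Spoly (α+1) β n (n-1-k) with hSdef
  set f1 : ℝ → ℝ := fun t => ((derivative^[k] q) * Spoly (α+1) β n (n-k)).eval t
      * (1-t)^(α+1+(k:ℝ)) * (1+t)^(β+(k:ℝ)) with hf1
  set f2 : ℝ → ℝ := fun t => ((derivative^[k+1] q) * S).eval t
      * (1-t)^(α+1+((k:ℝ)+1)) * (1+t)^(β+((k:ℝ)+1)) with hf2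
  set F : ℝ → ℝ := fun t => ((derivative^[k] q) * S).eval t
      * (1-t)^(α+1+(k:ℝ)+1) * (1+t)^(β+(k:ℝ)+1) with hF
  have int1 : IntervalIntegrable f1 volume (-1) 1 :=
    II (Polynomial.continuous _) (by linarith) (by linarith)
  have int2 : IntervalIntegrable f2 volume (-1) 1 :=
    II (Polynomial.continuous _) (by linarith) (by linarith)
  have key : ∫ t in (-1:ℝ)..1, (f1 t + f2 t) = 0 := by
    apply ibp_zero (F := F)
    · exact (contW _ (by linarith) (by linarith)).continuousOn
    · show ((derivative^[k] q) * S).eval 1 * (1-(1:ℝ))^(α+1+(k:ℝ)+1) * (1+(1:ℝ))^(β+(k:ℝ)+1) = 0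
      rw [show (1:ℝ)-1 = 0 by norm_num, Real.zero_rpow (by linarith : α+1+(k:ℝ)+1 ≠ 0)]
      ring
    · show ((derivative^[k] q) * S).eval (-1) * (1-(-1:ℝ))^(α+1+(k:ℝ)+1) * (1+(-1:ℝ))^(β+(k:ℝ)+1) = 0
      rw [show (1:ℝ)+(-1) = 0 by norm_num, Real.zero_rpow (by linarith : β+(k:ℝ)+1 ≠ 0)]
      ring
    · intro t ht
      have h1 : (0:ℝ) < 1 - t := by linarith [ht.2]
      have h2 : (0:ℝ) < 1 + t := by linarith [ht.1]
      have HD := hasDerivAt_weight ((derivative^[k] q) * S) (α+1+(k:ℝ)+1) (β+(k:ℝ)+1) ht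
      have heq : f1 t + f2 t
          = (((derivative^[k] q) * S).derivative.eval t * ((1-t) * (1+t))
            - (α+1+(k:ℝ)+1) * ((derivative^[k] q) * S).eval t * (1+t)
            + (β+(k:ℝ)+1) * ((derivative^[k] q) * S).eval t * (1-t))
            * (1-t) ^ (α+1+(k:ℝ)+1-1) * (1+t) ^ (β+(k:ℝ)+1-1) := by
        have e1 : α+1+(k:ℝ)+1-1 = α+1+(k:ℝ) := by ring
        have e2 : β+(k:ℝ)+1-1 = β+(k:ℝ) := by ring
        rw [e1, e2]
        simp only [hf1, hf2, derivative_mul, eval_add, eval_mul, hidx2, hidx,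
          Spoly_eval_rec, ← hSdef, Function.iterate_succ_apply', eval_mul]
        rw [show β+((k:ℝ)+1) = (β+(k:ℝ))+1 by ring, Real.rpow_add_one h2.ne',
          show α+1+((k:ℝ)+1) = (α+1+(k:ℝ))+1 by ring, Real.rpow_add_one h1.ne']
        rw [hcast]
        ring
      rw [heq]
      exact HD
    · exact int1.add int2
  rw [intervalIntegral.integral_add int1 int2] at key
  linarith

lemma chainV (α β : ℝ) (hα : -1 < α) (hβ : -1 < β) (n : ℕ)
    (q : Polynomial ℝ) (hq : q.natDegree < n) :
    ∫ t in (-1:ℝ)..1, (q * Spoly (α+1) β n n).eval t * (1-t)^(α+1) * (1+t)^β = 0 := by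
  have aux : ∀ k, k ≤ n →
      (∫ t in (-1:ℝ)..1, (q * Spoly (α+1) β n n).eval t * (1-t)^(α+1) * (1+t)^β)
        = (-1:ℝ)^k * ∫ t in (-1:ℝ)..1, ((derivative^[k] q) * Spoly (α+1) β n (n-k)).eval t
            * (1-t)^(α+1+(k:ℝ)) * (1+t)^(β+(k:ℝ)) := by
    intro k
    induction k with
    | zero => intro _; simp
    | succ k ih =>
      intro h
      rw [ih (by omega), chainV_step α β hα hβ n k (by omega) q]
      push_cast
      ring
  have hfin := aux n le_rfl
  rw [hfin]
  rw [Polynomial.iterate_derivative_eq_zero hq]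
  simp

lemma Spoly_one_gamma (A B : ℝ) (hA : 0 < A) (n : ℕ) : ∀ k, k ≤ n →
    (Spoly A B n k).eval 1 * Real.Gamma ((n:ℝ) + A + 1 - k)
      = (-2:ℝ)^k * Real.Gamma ((n:ℝ) + A + 1) := by
  intro k
  induction k with
  | zero => intro _; simp [Spoly]
  | succ k ih =>
    intro h
    have hpos : (0:ℝ) < (n:ℝ) + A - k := by
      have : (k:ℝ) + 1 ≤ (n:ℝ) := by exact_mod_cast Nat.succ_le_of_lt (by omega)
      linarith
    have hg : Real.Gamma ((n:ℝ) + A + 1 - k) = ((n:ℝ) + A - k) * Real.Gamma ((n:ℝ) + A - k) := by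
      rw [show (n:ℝ) + A + 1 - k = ((n:ℝ) + A - k) + 1 by ring, Real.Gamma_add_one hpos.ne']
    have hcast : (n:ℝ) + A + 1 - ((k:ℕ)+1:ℕ) = (n:ℝ) + A - k := by push_cast; ring
    rw [Spoly_eval_one, hcast]
    have := ih (by omega)
    rw [hg] at this
    calc -2*((n:ℝ) + A - k) * (Spoly A B n k).eval 1 * Real.Gamma ((n:ℝ) + A - k)
        = -2 * ((Spoly A B n k).eval 1 * (((n:ℝ) + A - k) * Real.Gamma ((n:ℝ) + A - k))) := by ring
      _ = -2 * ((-2:ℝ)^k * Real.Gamma ((n:ℝ) + A + 1)) := by rw [this]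
      _ = (-2:ℝ)^(k+1) * Real.Gamma ((n:ℝ) + A + 1) := by ring

lemma Spoly_lc_ne (A B : ℝ) (n : ℕ) (hpos : ∀ j : ℕ, j < n → 2*(n:ℝ) + A + B - j ≠ 0) :
    ∀ k, k ≤ n → (Spoly A B n k).coeff k ≠ 0 := by
  intro k
  induction k with
  | zero => intro _; simp [Spoly]
  | succ k ih =>
    intro h
    rw [Spoly_coeff_succ]
    exact mul_ne_zero (neg_ne_zero.mpr (hpos k (by omega))) (ih (by omega))

theorem stmt_15 (α β : ℝ) (hα : -1 < α) (hβ : -1 < β) (n : ℕ) (hn : 1 ≤ n)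
    (x : Fin n → ℝ) (hx : ∀ i, x i ∈ Ioo (-1 : ℝ) 1) (hinj : Function.Injective x)
    (wR : Fin n → ℝ)
    (hrule : ∀ p : Polynomial ℝ, p.natDegree ≤ 2 * n - 1 →
      ∫ t in (-1 : ℝ)..1, p.eval t * (1 - t) ^ (α + 1) * (1 + t) ^ β
        = ∑ i, wR i * p.eval (x i))
    (wn1 : ℝ) (hwn1 : wn1 = 2 ^ (α + β + 1) * Real.Gamma (α + 1) * Real.Gamma (α + 2)
        * Real.Gamma ((n : ℝ) + 1) * Real.Gamma ((n : ℝ) + β + 1)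
        / (Real.Gamma ((n : ℝ) + α + 2) * Real.Gamma ((n : ℝ) + α + β + 2)))
    (wt : Fin n → ℝ) (hwt : ∀ i, wt i = wR i / (1 - x i)) :
    ∀ p : Polynomial ℝ, p.natDegree ≤ 2 * n →
      ∫ t in (-1 : ℝ)..1, p.eval t * (1 - t) ^ α * (1 + t) ^ β
        = (∑ i, wt i * p.eval (x i)) + wn1 * p.eval 1 := by
  have hA : (0:ℝ) < α + 1 := by linarith
  have hα1 : (-1:ℝ) < α + 1 := by linarith
  have hxpos : ∀ i, (0:ℝ) < 1 - x i := fun i => by linarith [(hx i).2]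
  -- the nodal polynomial
  set L : Polynomial ℝ := ∏ i : Fin n, (X - C (x i)) with hLdef
  have hLne : ∀ i : Fin n, (X - C (x i) : Polynomial ℝ) ≠ 0 := fun i => X_sub_C_ne_zero (x i)
  have hLdeg : L.natDegree = n := by
    rw [hLdef, natDegree_prod _ _ (fun i _ => hLne i)]
    simp [natDegree_X_sub_C]
  have hLroot : ∀ i, L.eval (x i) = 0 := by
    intro i
    rw [hLdef, eval_prod]
    apply Finset.prod_eq_zero (Finset.mem_univ i)
    simp
  have hL1pos : 0 < L.eval 1 := by
    rw [hLdef, eval_prod]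
    apply Finset.prod_pos
    intro i _
    simp only [eval_sub, eval_X, eval_C]
    linarith [(hx i).2]
  have hLmonic : L.Monic := monic_prod_of_monic _ _ (fun i _ => monic_X_sub_C (x i))
  -- integrability of polynomial against any admissible weight
  have IIp : ∀ (P : Polynomial ℝ) (a b : ℝ), -1 < a → -1 < b →
      IntervalIntegrable (fun t => P.eval t * (1 - t) ^ a * (1 + t) ^ b) volume (-1) 1 :=
    fun P a b ha hb => II (Polynomial.continuous P) ha hb
  -- shifting (X-1) factor into the weight
  have hshift : ∀ Q : Polynomial ℝ,
      (∫ t in (-1:ℝ)..1, ((X - C 1) * Q).eval t * (1-t)^α * (1+t)^β)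
        = - ∫ t in (-1:ℝ)..1, Q.eval t * (1-t)^(α+1) * (1+t)^β := by
    intro Q
    rw [← intervalIntegral.integral_neg]
    apply intervalIntegral.integral_congr
    intro t ht
    rw [uIcc_of_le (by norm_num : (-1:ℝ) ≤ 1)] at ht
    show eval t ((X - C 1) * Q) * (1-t)^α * (1+t)^β
        = -(eval t Q * (1-t)^(α+1) * (1+t)^β)
    rcases eq_or_lt_of_le ht.2 with h1 | h1
    · subst h1
      norm_num [eval_mul, Real.zero_rpow (show α+1 ≠ 0 by linarith)]
    · have h2 : (0:ℝ) < 1 - t := by linarith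
      rw [Real.rpow_add_one h2.ne' α]
      simp only [eval_mul, eval_sub, eval_X, eval_C]
      ring
  -- orthogonality of L
  have horthL : ∀ s : Polynomial ℝ, s.natDegree < n →
      (∫ t in (-1:ℝ)..1, (L * s).eval t * (1-t)^(α+1) * (1+t)^β) = 0 := by
    intro s hs
    have hd : (L * s).natDegree ≤ 2*n - 1 :=
      le_trans natDegree_mul_le (by rw [hLdeg]; omega)
    rw [hrule (L * s) hd]
    apply Finset.sum_eq_zero
    intro i _
    rw [eval_mul, hLroot i]
    ring
  -- the Rodrigues polynomial
  set P : Polynomial ℝ := Spoly (α+1) β n n with hPdef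
  set lam : ℝ := P.coeff n with hlamdef
  have hlam : lam ≠ 0 := by
    rw [hlamdef, hPdef]
    apply Spoly_lc_ne (α+1) β n _ n le_rfl
    intro j hj
    have hj' : (j:ℝ) ≤ (n:ℝ) - 1 := by
      have : (j:ℝ) + 1 ≤ (n:ℝ) := by exact_mod_cast Nat.succ_le_of_lt hj
      linarith
    have hn' : (1:ℝ) ≤ (n:ℝ) := by exact_mod_cast hn
    intro hzero
    have : 2*(n:ℝ) + (α+1) + β - j > 0 := by linarith
    linarith
  set E : Polynomial ℝ := C lam * L - P with hEdef
  have hEcoeff : E.coeff n = 0 := by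
    rw [hEdef, coeff_sub, coeff_C_mul]
    have : L.coeff n = 1 := by
      have := hLmonic.coeff_natDegree
      rwa [hLdeg] at this
    rw [this, ← hlamdef]
    ring
  have hEdeg : E.natDegree ≤ n := by
    rw [hEdef]
    apply le_trans (natDegree_sub_le _ _)
    apply max_le
    · exact le_trans natDegree_mul_le (by simp [natDegree_C, hLdeg])
    · exact Spoly_natDegree_le (α+1) β n n
  have hEorth : ∀ s : Polynomial ℝ, s.natDegree < n →
      (∫ t in (-1:ℝ)..1, (E * s).eval t * (1-t)^(α+1) * (1+t)^β) = 0 := by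
    intro s hs
    have e : ∀ t : ℝ, (E * s).eval t * (1-t)^(α+1) * (1+t)^β
        = lam * ((L * s).eval t * (1-t)^(α+1) * (1+t)^β)
          - ((s * P).eval t * (1-t)^(α+1) * (1+t)^β) := by
      intro t
      simp only [hEdef, eval_mul, eval_sub, eval_C]
      ring
    calc (∫ t in (-1:ℝ)..1, (E * s).eval t * (1-t)^(α+1) * (1+t)^β)
        = ∫ t in (-1:ℝ)..1, (lam * ((L * s).eval t * (1-t)^(α+1) * (1+t)^β)
            - ((s * P).eval t * (1-t)^(α+1) * (1+t)^β)) := by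
          apply intervalIntegral.integral_congr
          intro t _
          exact e t
      _ = lam * (∫ t in (-1:ℝ)..1, (L * s).eval t * (1-t)^(α+1) * (1+t)^β)
            - ∫ t in (-1:ℝ)..1, (s * P).eval t * (1-t)^(α+1) * (1+t)^β := by
          rw [intervalIntegral.integral_sub (((IIp (L*s) _ _ hα1 hβ)).const_mul lam)
            (IIp (s*P) _ _ hα1 hβ), intervalIntegral.integral_const_mul]
      _ = 0 := by
          rw [horthL s hs, hPdef, chainV α β hα hβ n s hs]
          ring
  have hE0 : E = 0 := by
    by_contra hne
    have hdne : E.natDegree ≠ n := by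
      intro hh
      apply hne
      apply leadingCoeff_eq_zero.mp
      rw [leadingCoeff, hh, hEcoeff]
    have hdeglt : E.natDegree < n := lt_of_le_of_ne hEdeg hdne
    have h0 := hEorth E hdeglt
    have h0' : (∫ t in (-1:ℝ)..1, (E.eval t)^2 * (1-t)^(α+1) * (1+t)^β) = 0 := by
      rw [← h0]
      apply intervalIntegral.integral_congr
      intro t _
      simp only [eval_mul]
      ring
    have hint : IntervalIntegrable (fun t => (E.eval t)^2 * (1 - t) ^ (α+1) * (1 + t) ^ β)
        volume (-1) 1 := by
      have := IIp (E * E) (α+1) β hα1 hβ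
      have e2 : (fun t => (E*E).eval t * (1 - t) ^ (α+1) * (1 + t) ^ β)
          = fun t => (E.eval t)^2 * (1 - t) ^ (α+1) * (1 + t) ^ β := by
        funext t; rw [eval_mul]; ring
      rwa [e2] at this
    have hpos := posint hne hα1 hβ ((Polynomial.continuous E).pow 2) hint
    linarith
  have hPL : C lam * L = P := by rwa [sub_eq_zero] at hE0
  -- key evaluation of the integral of L against the target weight
  have hn' : (1:ℝ) ≤ (n:ℝ) := by exact_mod_cast hn
  have hGne1 : Real.Gamma (α+2) ≠ 0 := (Real.Gamma_pos_of_pos (by linarith)).ne'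
  have hGne2 : Real.Gamma ((n:ℝ)+α+2) ≠ 0 := (Real.Gamma_pos_of_pos (by linarith)).ne'
  have hGne3 : Real.Gamma ((n:ℝ)+α+β+2) ≠ 0 := (Real.Gamma_pos_of_pos (by linarith)).ne'
  have hPint : lam * (∫ t in (-1:ℝ)..1, L.eval t * (1-t)^α * (1+t)^β)
      = ∫ t in (-1:ℝ)..1, P.eval t * (1-t)^α * (1+t)^β := by
    rw [← intervalIntegral.integral_const_mul, ← hPL]
    apply intervalIntegral.integral_congr
    intro t _
    simp only [eval_mul, eval_C]
    ring
  have hP1 : lam * L.eval 1 = P.eval 1 := by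
    have := congrArg (eval 1) hPL
    simpa [eval_mul, eval_C] using this
  have hPval : P.eval 1 * Real.Gamma (α+2) = (-2:ℝ)^n * Real.Gamma ((n:ℝ)+α+2) := by
    have h := Spoly_one_gamma (α+1) β hA n n le_rfl
    rw [show (n:ℝ)+(α+1)+1-(n:ℝ) = α+2 by ring, show (n:ℝ)+(α+1)+1 = (n:ℝ)+α+2 by ring] at h
    exact h
  have hPint2 := chainU α β hα hβ n
  rw [← hPdef] at hPint2
  have hstar : (∫ t in (-1:ℝ)..1, P.eval t * (1-t)^α * (1+t)^β) * Real.Gamma (α+2)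
      = wn1 * ((-2:ℝ)^n * Real.Gamma ((n:ℝ)+α+2)) := by
    rw [hPint2, hwn1]
    rw [show α + (β+(n:ℝ)) + 1 = (α+β+1) + (n:ℝ) by ring,
      Real.rpow_add (by norm_num : (0:ℝ) < 2) (α+β+1) (n:ℝ),
      Real.rpow_natCast,
      show (β+(n:ℝ)) + 1 = (n:ℝ)+β+1 by ring,
      show α + (β+(n:ℝ)) + 2 = (n:ℝ)+α+β+2 by ring,
      show ((-2:ℝ))^n = (-1:ℝ)^n * 2^n by rw [← mul_pow]; norm_num,
      show Real.Gamma ((n:ℝ)+1) = (n.factorial : ℝ) from Real.Gamma_nat_eq_factorial n]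
    field_simp
  have KEY : (∫ t in (-1:ℝ)..1, L.eval t * (1-t)^α * (1+t)^β) = wn1 * L.eval 1 := by
    apply mul_left_cancel₀ hlam
    apply mul_right_cancel₀ hGne1
    calc lam * (∫ t in (-1:ℝ)..1, L.eval t * (1-t)^α * (1+t)^β) * Real.Gamma (α+2)
        = (∫ t in (-1:ℝ)..1, P.eval t * (1-t)^α * (1+t)^β) * Real.Gamma (α+2) := by
          rw [hPint]
      _ = wn1 * ((-2:ℝ)^n * Real.Gamma ((n:ℝ)+α+2)) := hstar
      _ = wn1 * (P.eval 1 * Real.Gamma (α+2)) := by rw [hPval]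
      _ = lam * (wn1 * L.eval 1) * Real.Gamma (α+2) := by rw [← hP1]; ring
  -- squared nodal polynomial integral
  have SQ : (∫ t in (-1:ℝ)..1, (L*L).eval t * (1-t)^α * (1+t)^β)
      = L.eval 1 * ∫ t in (-1:ℝ)..1, L.eval t * (1-t)^α * (1+t)^β := by
    obtain ⟨m, hm⟩ : (X - C 1) ∣ (L - C (L.eval 1)) := dvd_iff_isRoot.mpr (by simp)
    have hmdeg : (L * m).natDegree ≤ 2*n - 1 := by
      rcases eq_or_ne m 0 with h0 | h0
      · simp [h0]
      · have hdm : (L - C (L.eval 1)).natDegree = 1 + m.natDegree := by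
          rw [hm, natDegree_mul (X_sub_C_ne_zero 1) h0, natDegree_X_sub_C]
        have hsub : (L - C (L.eval 1)).natDegree ≤ n :=
          le_trans (natDegree_sub_le _ _) (by simp [hLdeg])
        apply le_trans natDegree_mul_le
        rw [hLdeg]
        omega
    have hid : L * L = (X - C 1) * (L * m) + C (L.eval 1) * L := by
      linear_combination L * hm
    have hconst : (∫ t in (-1:ℝ)..1, (C (L.eval 1) * L).eval t * (1-t)^α * (1+t)^β)
        = L.eval 1 * ∫ t in (-1:ℝ)..1, L.eval t * (1-t)^α * (1+t)^β := by
      rw [← intervalIntegral.integral_const_mul]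
      apply intervalIntegral.integral_congr
      intro t _
      simp only [eval_mul, eval_C]
      ring
    calc (∫ t in (-1:ℝ)..1, (L*L).eval t * (1-t)^α * (1+t)^β)
        = ∫ t in (-1:ℝ)..1, (((X - C 1) * (L * m)).eval t * (1-t)^α * (1+t)^β
            + (C (L.eval 1) * L).eval t * (1-t)^α * (1+t)^β) := by
          apply intervalIntegral.integral_congr
          intro t _
          simp only [hid, eval_add]
          ring
      _ = (∫ t in (-1:ℝ)..1, ((X - C 1) * (L * m)).eval t * (1-t)^α * (1+t)^β)
            + ∫ t in (-1:ℝ)..1, (C (L.eval 1) * L).eval t * (1-t)^α * (1+t)^β :=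
          intervalIntegral.integral_add (IIp _ _ _ hα hβ) (IIp _ _ _ hα hβ)
      _ = -(∫ t in (-1:ℝ)..1, (L * m).eval t * (1-t)^(α+1) * (1+t)^β)
            + L.eval 1 * ∫ t in (-1:ℝ)..1, L.eval t * (1-t)^α * (1+t)^β := by
          rw [hshift (L * m), hconst]
      _ = L.eval 1 * ∫ t in (-1:ℝ)..1, L.eval t * (1-t)^α * (1+t)^β := by
          rw [hrule (L * m) hmdeg]
          rw [Finset.sum_eq_zero (fun i _ => by rw [eval_mul, hLroot i]; ring)]
          ring
  -- main computation
  intro p hp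
  set c : ℝ := p.eval 1 / (L.eval 1)^2 with hcdef
  set r : Polynomial ℝ := C c * (L * L) with hrdef
  have hrx : ∀ i, r.eval (x i) = 0 := by
    intro i
    simp [hrdef, eval_mul, hLroot i]
  have hr1 : r.eval 1 = p.eval 1 := by
    have hLne1 : L.eval 1 ≠ 0 := hL1pos.ne'
    simp only [hrdef, eval_mul, eval_C, hcdef]
    rw [pow_two, div_mul_eq_mul_div, mul_div_assoc,
      div_self (mul_ne_zero hLne1 hLne1), mul_one]
  obtain ⟨Q, hQ⟩ : (X - C 1) ∣ (p - r) := dvd_iff_isRoot.mpr (by simp [IsRoot, hr1])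
  have hrdeg2 : r.natDegree ≤ 2*n := by
    apply le_trans natDegree_mul_le
    have : (L * L).natDegree ≤ 2*n := le_trans natDegree_mul_le (by rw [hLdeg]; omega)
    simp [natDegree_C]
    omega
  have hQdeg : Q.natDegree ≤ 2*n - 1 := by
    rcases eq_or_ne Q 0 with h0 | h0
    · simp [h0]
    · have hdq : (p - r).natDegree = 1 + Q.natDegree := by
        rw [hQ, natDegree_mul (X_sub_C_ne_zero 1) h0, natDegree_X_sub_C]
      have : (p - r).natDegree ≤ 2*n := le_trans (natDegree_sub_le _ _) (max_le hp hrdeg2)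
      omega
  have hQx : ∀ i, wR i * Q.eval (x i) = -(wt i * p.eval (x i)) := by
    intro i
    have h := congrArg (eval (x i)) hQ
    simp only [eval_sub, eval_mul, eval_X, eval_C, hrx i, sub_zero] at h
    rw [hwt i]
    have h1 := hxpos i
    field_simp
    linear_combination wR i * h
  have hpe : p = (X - C 1) * Q + r := by linear_combination hQ
  have hrint : (∫ t in (-1:ℝ)..1, r.eval t * (1-t)^α * (1+t)^β) = wn1 * p.eval 1 := by
    have hc : (∫ t in (-1:ℝ)..1, r.eval t * (1-t)^α * (1+t)^β)
        = c * ∫ t in (-1:ℝ)..1, (L*L).eval t * (1-t)^α * (1+t)^β := by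
      rw [← intervalIntegral.integral_const_mul]
      apply intervalIntegral.integral_congr
      intro t _
      simp only [hrdef, eval_mul, eval_C]
      ring
    have hLne1 : L.eval 1 ≠ 0 := hL1pos.ne'
    rw [hc, SQ, KEY, hcdef]
    field_simp
  calc (∫ t in (-1:ℝ)..1, p.eval t * (1-t)^α * (1+t)^β)
      = ∫ t in (-1:ℝ)..1, (((X - C 1) * Q).eval t * (1-t)^α * (1+t)^β
          + r.eval t * (1-t)^α * (1+t)^β) := by
        apply intervalIntegral.integral_congr
        intro t _
        simp only [hpe, eval_add]
        ring
    _ = (∫ t in (-1:ℝ)..1, ((X - C 1) * Q).eval t * (1-t)^α * (1+t)^β)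
          + ∫ t in (-1:ℝ)..1, r.eval t * (1-t)^α * (1+t)^β :=
        intervalIntegral.integral_add (IIp _ _ _ hα hβ) (IIp _ _ _ hα hβ)
    _ = -(∫ t in (-1:ℝ)..1, Q.eval t * (1-t)^(α+1) * (1+t)^β) + wn1 * p.eval 1 := by
        rw [hshift Q, hrint]
    _ = -(∑ i, wR i * Q.eval (x i)) + wn1 * p.eval 1 := by
        rw [hrule Q hQdeg]
    _ = (∑ i, wt i * p.eval (x i)) + wn1 * p.eval 1 := by
        rw [show (∑ i, wR i * Q.eval (x i)) = ∑ i, -(wt i * p.eval (x i)) from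
          Finset.sum_congr rfl (fun i _ => hQx i), Finset.sum_neg_distrib]
        ring
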